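/- Let (W, d) be a metric space and Cap a monotone, finitely subadditive set function on subsets of W. Suppose T^{ε,m}, T^ε : W → X are maps into a metric space (X,ρ), each family {T^{ε,m}} satisfies the Cap-LDP upper bound with good rate function I_m, the families {T^{ε,m}} are exponentially good approximations of {T^ε} under Cap, and I is a good rate function satisfying inf_{x∈C} I(x) ≤ limsup_{m→∞} inf_{x∈C_λ} I_m(x) for all closed C and its λ-fattenings C_λ. Then for every closed C ⊆ X: limsup_{ε→0} ε² log Cap{w : T^ε(w) ∈ C} ≤ −(1/q) inf_{x∈C} I(x). -/

import Mathlib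

open Filter Metric Set Topology
open scoped ENNReal NNReal

private lemma ereal_limsup_sup_le {α : Type*} {f : Filter α} (u v : α → EReal) :
    limsup (fun x => u x ⊔ v x) f ≤ limsup u f ⊔ limsup v f := by
  refine le_of_forall_gt_imp_ge_of_dense fun b hb => ?_
  have hu : ∀ᶠ x in f, u x < b :=
    eventually_lt_of_limsup_lt (lt_of_le_of_lt le_sup_left hb)
  have hv : ∀ᶠ x in f, v x < b :=
    eventually_lt_of_limsup_lt (lt_of_le_of_lt le_sup_right hb)
  exact limsup_le_of_le (by isBoundedDefault)
    ((hu.and hv).mono fun x hx => sup_le hx.1.le hx.2.le)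

private lemma ereal_coe_mul_add (x : ℝ) (hx : 0 ≤ x) (a : ℝ) (b : EReal) :
    (x : EReal) * ((a : EReal) + b) = (x : EReal) * a + (x : EReal) * b := by
  rcases eq_or_lt_of_le hx with hx0 | hxpos
  · simp [← hx0]
  · have hxp : (0 : EReal) < (x : EReal) := EReal.coe_pos.mpr hxpos
    induction b with
    | bot =>
        rw [EReal.add_bot, EReal.mul_bot_of_pos hxp, EReal.add_bot]
    | coe b =>
        rw [← EReal.coe_add, ← EReal.coe_mul, ← EReal.coe_mul, ← EReal.coe_mul, ← EReal.coe_add,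
          mul_add]
    | top =>
        rw [EReal.add_top_of_ne_bot (EReal.coe_ne_bot a), EReal.mul_top_of_pos hxp,
          ← EReal.coe_mul, EReal.add_top_of_ne_bot (EReal.coe_ne_bot _)]

private lemma key_union {W : Type*} (Cap : Set W → ℝ≥0∞)
    (hsub : ∀ A B : Set W, Cap (A ∪ B) ≤ Cap A + Cap B)
    (A B : ℝ → Set W) :
    limsup (fun ε : ℝ => ((ε ^ 2 : ℝ) : EReal) * ENNReal.log (Cap (A ε ∪ B ε))) (𝓝[>] 0)
      ≤ limsup (fun ε : ℝ => ((ε ^ 2 : ℝ) : EReal) * ENNReal.log (Cap (A ε))) (𝓝[>] 0)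
        ⊔ limsup (fun ε : ℝ => ((ε ^ 2 : ℝ) : EReal) * ENNReal.log (Cap (B ε))) (𝓝[>] 0) := by
  have hlog2 : ENNReal.log 2 = ((Real.log 2 : ℝ) : EReal) := by
    rw [ENNReal.log_pos_real (by norm_num) (by norm_num)]
    norm_num
  have hpt : ∀ ε : ℝ, ((ε ^ 2 : ℝ) : EReal) * ENNReal.log (Cap (A ε ∪ B ε))
      ≤ (((ε ^ 2 : ℝ) : EReal) * ((Real.log 2 : ℝ) : EReal))
        + (((ε ^ 2 : ℝ) : EReal) * ENNReal.log (Cap (A ε))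
            ⊔ ((ε ^ 2 : ℝ) : EReal) * ENNReal.log (Cap (B ε))) := by
    intro ε
    have hsq : (0 : EReal) ≤ ((ε ^ 2 : ℝ) : EReal) := EReal.coe_nonneg.mpr (sq_nonneg ε)
    have h1 : Cap (A ε ∪ B ε) ≤ 2 * (Cap (A ε) ⊔ Cap (B ε)) := by
      refine (hsub _ _).trans ?_
      rw [two_mul]
      exact add_le_add le_sup_left le_sup_right
    have h2 : ENNReal.log (Cap (A ε ∪ B ε))
        ≤ ENNReal.log 2 + ENNReal.log (Cap (A ε) ⊔ Cap (B ε)) := by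
      rw [← ENNReal.log_mul_add]
      exact ENNReal.log_monotone h1
    calc ((ε ^ 2 : ℝ) : EReal) * ENNReal.log (Cap (A ε ∪ B ε))
        ≤ ((ε ^ 2 : ℝ) : EReal) * (ENNReal.log 2 + ENNReal.log (Cap (A ε) ⊔ Cap (B ε))) :=
          mul_le_mul_of_nonneg_left h2 hsq
      _ = ((ε ^ 2 : ℝ) : EReal) * ((Real.log 2 : ℝ) : EReal)
            + ((ε ^ 2 : ℝ) : EReal) * ENNReal.log (Cap (A ε) ⊔ Cap (B ε)) := by
          rw [hlog2, ereal_coe_mul_add _ (sq_nonneg ε)]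
      _ ≤ _ := by
          apply add_le_add_right
          rcases le_total (Cap (A ε)) (Cap (B ε)) with h | h
          · rw [sup_eq_right.2 h]
            exact le_sup_right
          · rw [sup_eq_left.2 h]
            exact le_sup_left
  have hlim0 : Tendsto (fun ε : ℝ => ((ε ^ 2 : ℝ) : EReal) * ((Real.log 2 : ℝ) : EReal))
      (𝓝[>] (0 : ℝ)) (𝓝 (0 : EReal)) := by
    have h1 : Tendsto (fun ε : ℝ => ε ^ 2 * Real.log 2) (𝓝 0) (𝓝 0) := by
      have hc2 : Continuous fun ε : ℝ => ε ^ 2 * Real.log 2 :=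
        (continuous_pow 2).mul continuous_const
      simpa using hc2.tendsto (0 : ℝ)
    have h2 : Tendsto (fun ε : ℝ => ε ^ 2 * Real.log 2) (𝓝[>] (0 : ℝ)) (𝓝 0) :=
      h1.mono_left nhdsWithin_le_nhds
    have h3 : Tendsto (fun ε : ℝ => ((ε ^ 2 * Real.log 2 : ℝ) : EReal)) (𝓝[>] (0 : ℝ))
        (𝓝 ((0 : ℝ) : EReal)) := EReal.tendsto_coe.mpr h2
    simpa [EReal.coe_mul] using h3
  have hlimf : limsup (fun ε : ℝ => ((ε ^ 2 : ℝ) : EReal) * ((Real.log 2 : ℝ) : EReal))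
      (𝓝[>] (0 : ℝ)) = 0 := hlim0.limsup_eq
  calc limsup (fun ε : ℝ => ((ε ^ 2 : ℝ) : EReal) * ENNReal.log (Cap (A ε ∪ B ε))) (𝓝[>] 0)
      ≤ limsup ((fun ε : ℝ => ((ε ^ 2 : ℝ) : EReal) * ((Real.log 2 : ℝ) : EReal))
          + fun ε : ℝ => (((ε ^ 2 : ℝ) : EReal) * ENNReal.log (Cap (A ε))
            ⊔ ((ε ^ 2 : ℝ) : EReal) * ENNReal.log (Cap (B ε)))) (𝓝[>] 0) :=
        limsup_le_limsup (Eventually.of_forall hpt)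
    _ ≤ limsup (fun ε : ℝ => ((ε ^ 2 : ℝ) : EReal) * ((Real.log 2 : ℝ) : EReal)) (𝓝[>] 0)
          + limsup (fun ε : ℝ => (((ε ^ 2 : ℝ) : EReal) * ENNReal.log (Cap (A ε))
            ⊔ ((ε ^ 2 : ℝ) : EReal) * ENNReal.log (Cap (B ε)))) (𝓝[>] 0) :=
        EReal.limsup_add_le (Or.inl (ne_of_eq_of_ne hlimf (by simp)))
          (Or.inl (ne_of_eq_of_ne hlimf (by simp)))
    _ = limsup (fun ε : ℝ => (((ε ^ 2 : ℝ) : EReal) * ENNReal.log (Cap (A ε))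
            ⊔ ((ε ^ 2 : ℝ) : EReal) * ENNReal.log (Cap (B ε)))) (𝓝[>] 0) := by
        rw [hlimf, zero_add]
    _ ≤ _ := ereal_limsup_sup_le _ _

/-- Upper bound for a Cap-LDP obtained via exponentially good approximations:
if each family `T^{ε,m}` satisfies the `Cap`-LDP upper bound with good rate
function `Im m`, the `T^{ε,m}` are exponentially good approximations of `Tε`
under `Cap`, and the good rate function `I` satisfies
`inf_C I ≤ limsup_m inf_{C_λ} Im m` for all closed `C` and `λ > 0`, then the
`Cap`-LDP upper bound holds for `Tε` with rate function `I`. -/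
theorem capacity_ldp_upper_via_exponential_approximation
    {W X : Type*} [MetricSpace X]
    (Cap : Set W → ℝ≥0∞)
    (hmono : ∀ A B : Set W, A ⊆ B → Cap A ≤ Cap B)
    (hsub : ∀ A B : Set W, Cap (A ∪ B) ≤ Cap A + Cap B)
    (q : ℝ) (hq : 1 < q)
    (T : ℝ → ℕ → W → X) (Te : ℝ → W → X)
    (Im : ℕ → X → ℝ≥0∞) (I : X → ℝ≥0∞)
    (hImlsc : ∀ m, LowerSemicontinuous (Im m))
    (hImcomp : ∀ m, ∀ α : ℝ≥0, IsCompact {x : X | Im m x ≤ (α : ℝ≥0∞)})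
    (hIlsc : LowerSemicontinuous I)
    (hIcomp : ∀ α : ℝ≥0, IsCompact {x : X | I x ≤ (α : ℝ≥0∞)})
    (hupper : ∀ m : ℕ, ∀ C : Set X, IsClosed C →
      limsup (fun ε : ℝ => ((ε ^ 2 : ℝ) : EReal) *
          ENNReal.log (Cap {w | T ε m w ∈ C})) (𝓝[>] 0)
        ≤ -(((1 / q : ℝ) : EReal) * ((⨅ x ∈ C, Im m x : ℝ≥0∞) : EReal)))
    (happrox : ∀ lam : ℝ, 0 < lam →
      Tendsto (fun m : ℕ => limsup (fun ε : ℝ => ((ε ^ 2 : ℝ) : EReal) *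
          ENNReal.log (Cap {w | lam < dist (T ε m w) (Te ε w)})) (𝓝[>] 0))
        atTop (𝓝 (⊥ : EReal)))
    (hrate : ∀ C : Set X, IsClosed C → ∀ lam : ℝ, 0 < lam →
      (⨅ x ∈ C, I x)
        ≤ limsup (fun m : ℕ => ⨅ x ∈ {x : X | ∃ y ∈ C, dist x y ≤ lam}, Im m x) atTop) :
    ∀ C : Set X, IsClosed C →
      limsup (fun ε : ℝ => ((ε ^ 2 : ℝ) : EReal) *
          ENNReal.log (Cap {w | Te ε w ∈ C})) (𝓝[>] 0)
        ≤ -(((1 / q : ℝ) : EReal) * ((⨅ x ∈ C, I x : ℝ≥0∞) : EReal)) := by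
  intro C hC
  have hq0 : (0 : ℝ) < q := lt_trans one_pos hq
  set c : EReal := ((1 / q : ℝ) : EReal) with hc
  have hc0 : (0 : EReal) ≤ c := EReal.coe_nonneg.mpr (by positivity)
  set κ : ℝ≥0∞ := ⨅ x ∈ C, I x with hκ
  set L : EReal := limsup (fun ε : ℝ => ((ε ^ 2 : ℝ) : EReal) *
      ENNReal.log (Cap {w | Te ε w ∈ C})) (𝓝[>] 0) with hL
  by_contra hcon
  push_neg at hcon
  obtain ⟨z, hz1, hz2⟩ := EReal.exists_between_coe_real hcon
  -- the fattened sets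
  set D : Set X := Metric.cthickening (1 / 2) C with hD
  have hDclosed : IsClosed D := Metric.isClosed_cthickening
  set C1 : Set X := {x : X | ∃ y ∈ C, dist x y ≤ 1} with hC1
  have hDC1 : D ⊆ C1 := by
    intro x hx
    rw [hD, Metric.cthickening, mem_setOf_eq] at hx
    have h1 : EMetric.infEdist x C < ENNReal.ofReal 1 := by
      refine lt_of_le_of_lt hx ?_
      rw [ENNReal.ofReal_lt_ofReal_iff] <;> norm_num
    obtain ⟨y, hyC, hxy⟩ := EMetric.infEdist_lt_iff.mp h1
    exact ⟨y, hyC, le_of_lt ((edist_lt_ofReal).mp hxy)⟩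
  -- the approximation errors
  set A' : ℕ → EReal := fun m => limsup (fun ε : ℝ => ((ε ^ 2 : ℝ) : EReal) *
      ENNReal.log (Cap {w | (1 / 2 : ℝ) < dist (T ε m w) (Te ε w)})) (𝓝[>] 0) with hA'
  -- bound on L for each m
  have hLm : ∀ m : ℕ,
      L ≤ (-(c * ((⨅ x ∈ C1, Im m x : ℝ≥0∞) : EReal))) ⊔ A' m := by
    intro m
    have hsubset : ∀ ε : ℝ, {w | Te ε w ∈ C}
        ⊆ ({w | T ε m w ∈ D} ∪ {w | (1 / 2 : ℝ) < dist (T ε m w) (Te ε w)}) := by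
      intro ε w hw
      by_cases hd : (1 / 2 : ℝ) < dist (T ε m w) (Te ε w)
      · exact Or.inr hd
      · exact Or.inl (Metric.mem_cthickening_of_dist_le _ _ _ _ hw (le_of_not_gt hd))
    have hinf : ((⨅ x ∈ C1, Im m x : ℝ≥0∞) : EReal) ≤ ((⨅ x ∈ D, Im m x : ℝ≥0∞) : EReal) :=
      EReal.coe_ennreal_le_coe_ennreal_iff.mpr (iInf_le_iInf_of_subset hDC1)
    have step1 : L ≤ limsup (fun ε : ℝ => ((ε ^ 2 : ℝ) : EReal) *
        ENNReal.log (Cap ({w | T ε m w ∈ D}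
          ∪ {w | (1 / 2 : ℝ) < dist (T ε m w) (Te ε w)}))) (𝓝[>] 0) := by
      rw [hL]
      refine limsup_le_limsup (Eventually.of_forall fun ε => ?_)
      exact mul_le_mul_of_nonneg_left
        (ENNReal.log_monotone (hmono _ _ (hsubset ε)))
        (EReal.coe_nonneg.mpr (sq_nonneg ε))
    have step2 := key_union Cap hsub (fun ε => {w | T ε m w ∈ D})
      (fun ε => {w | (1 / 2 : ℝ) < dist (T ε m w) (Te ε w)})
    have step3 : limsup (fun ε : ℝ => ((ε ^ 2 : ℝ) : EReal) *
        ENNReal.log (Cap {w | T ε m w ∈ D})) (𝓝[>] 0)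
          ≤ -(c * ((⨅ x ∈ D, Im m x : ℝ≥0∞) : EReal)) := hupper m D hDclosed
    have step4 : -(c * ((⨅ x ∈ D, Im m x : ℝ≥0∞) : EReal))
        ≤ -(c * ((⨅ x ∈ C1, Im m x : ℝ≥0∞) : EReal)) :=
      EReal.neg_le_neg_iff.mpr (mul_le_mul_of_nonneg_left hinf hc0)
    exact step1.trans (step2.trans (sup_le_sup_right (step3.trans step4) _))
  -- the approximation errors eventually drop below z
  have hA : ∀ᶠ m in atTop, A' m < (z : EReal) :=
    happrox (1 / 2) (by norm_num) (isOpen_Iio.mem_nhds (EReal.bot_lt_coe z))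
  -- cancellation helper
  have hcancel : ∀ x : EReal, ((q : ℝ) : EReal) * (c * x) = x := by
    intro x
    rw [hc, ← mul_assoc, ← EReal.coe_mul, mul_one_div, div_self hq0.ne', EReal.coe_one, one_mul]
  set t : ℝ := q * (-z) with ht
  have hct : c * ((t : ℝ) : EReal) = ((-z : ℝ) : EReal) := by
    rw [hc, ← EReal.coe_mul]
    congr 1
    field_simp
    rw [ht]
    ring
  have hzc : ((-z : ℝ) : EReal) < c * (κ : EReal) := by
    rw [EReal.coe_neg]
    exact EReal.neg_lt_comm.mp hz1
  have htκ : ((t : ℝ) : EReal) < (κ : EReal) := by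
    by_contra hle
    push_neg at hle
    have h2 : c * (κ : EReal) ≤ c * ((t : ℝ) : EReal) := mul_le_mul_of_nonneg_left hle hc0
    rw [hct] at h2
    exact absurd (lt_of_lt_of_le hzc h2) (lt_irrefl _)
  -- frequently the infimum over C1 exceeds t
  have hfreq : ∃ᶠ m in atTop, ((t : ℝ) : EReal) < ((⨅ x ∈ C1, Im m x : ℝ≥0∞) : EReal) := by
    rcases lt_or_ge t 0 with ht0 | ht0
    · refine Filter.Frequently.of_forall fun m => ?_
      exact lt_of_lt_of_le (by exact_mod_cast ht0) (EReal.coe_ennreal_nonneg _)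
    · have hτκ : ENNReal.ofReal t < κ := by
        rw [← EReal.coe_ennreal_lt_coe_ennreal_iff, EReal.coe_ennreal_ofReal, max_eq_left ht0]
        exact htκ
      have hlim := hrate C hC 1 one_pos
      have hfr : ∃ᶠ m in atTop, ENNReal.ofReal t < ⨅ x ∈ C1, Im m x :=
        frequently_lt_of_lt_limsup (by isBoundedDefault) (lt_of_lt_of_le hτκ hlim)
      refine hfr.mono fun m hm => ?_
      calc ((t : ℝ) : EReal) = ((ENNReal.ofReal t : ℝ≥0∞) : EReal) := by
            rw [EReal.coe_ennreal_ofReal, max_eq_left ht0]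
        _ < _ := EReal.coe_ennreal_lt_coe_ennreal_iff.mpr hm
  obtain ⟨m, hm1, hm2⟩ := (hfreq.and_eventually hA).exists
  have hfin : -(c * ((⨅ x ∈ C1, Im m x : ℝ≥0∞) : EReal)) < (z : EReal) := by
    refine EReal.neg_lt_comm.mpr ?_
    rw [← EReal.coe_neg, ← hct]
    by_contra hle2
    push_neg at hle2
    have h3 := mul_le_mul_of_nonneg_left hle2
      (EReal.coe_nonneg.mpr hq0.le : (0 : EReal) ≤ ((q : ℝ) : EReal))
    rw [hcancel, hcancel] at h3
    exact absurd hm1 (not_lt.mpr h3)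
  have hLz : L < (z : EReal) := lt_of_le_of_lt (hLm m) (sup_lt_iff.mpr ⟨hfin, hm2⟩)
  exact absurd (hz2.trans hLz) (lt_irrefl _)
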